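/- Let r ≥ 0 and λ_0,…,λ_r ∈ 𝔊. Suppose that for every f : ℤ → ℝ the function R(f)(i,j) = Σ_{k=0}^r λ_k(i,j)·f(i+k) satisfies L(R(f)) = 0. If the Laplace j-invariants H_0,…,H_r are all nowhere zero, then λ_r vanishes identically. (Equivalently: if R = Σ λ_k·T_i^k is an i-symmetry driver, i.e. λ_r is not identically zero, then some H_p with p ≤ r fails to be nowhere-vanishing.) -/

import Mathlib

/-!
Discrete (quad-graph) setting: the space `𝔊` is modelled by `QG = ℤ → ℤ → ℝ`
(functions `φ(i,j)`), with the shifts `Ti`, `Tj`, their inverses, and the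
`k`-fold shifts `TiZ k`, `TjZ k`.  For `g : QG`, pointwise multiplication
`g * φ` models the operator `g·`.
-/

/-- The function space `𝔊` of functions `ℤ² → ℝ`. -/
abbrev QG : Type := ℤ → ℤ → ℝ

namespace QG

noncomputable section

/-- The shift operator `T_i(φ)(i,j) = φ(i+1,j)`. -/
def Ti (φ : QG) : QG := fun i j => φ (i + 1) j

/-- The shift operator `T_j(φ)(i,j) = φ(i,j+1)`. -/
def Tj (φ : QG) : QG := fun i j => φ i (j + 1)

/-- The `k`-fold shift in `i`. -/
def TiZ (k : ℤ) (φ : QG) : QG := fun i j => φ (i + k) j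

/-- The `k`-fold shift in `j`. -/
def TjZ (k : ℤ) (φ : QG) : QG := fun i j => φ i (j + k)

/-- The inverse shift `T_i⁻¹`. -/
def TiInv (φ : QG) : QG := fun i j => φ (i - 1) j

/-- The inverse shift `T_j⁻¹`. -/
def TjInv (φ : QG) : QG := fun i j => φ i (j - 1)

/-- A function that is nowhere zero. -/
def NowhereZero (φ : QG) : Prop := ∀ i j, φ i j ≠ 0

/-- The linearization operator `L = T_i∘T_j − a·T_i − b·T_j − c·`. -/
def L (a b c : QG) (φ : QG) : QG := Ti (Tj φ) - a * Ti φ - b * Tj φ - c * φ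

/-- The pair `(b_k, H_k)` of the Laplace j-transformations:
`b_0 = a`, `H_0 = c + b·T_i⁻¹(a)`,
`b_{k+1} = T_i⁻¹(b_k)·T_j(H_k)/H_k`,
`H_{k+1} = T_j(H_k) − T_j^k(b)·b_{k+1} + T_j^{k+1}(b)·T_i⁻¹(b_{k+1})`. -/
def bH (a b c : QG) : ℕ → QG × QG
  | 0 => (a, c + b * TiInv a)
  | k + 1 =>
      let bk := TiInv (bH a b c k).1 * Tj (bH a b c k).2 / (bH a b c k).2
      (bk, Tj (bH a b c k).2 - TjZ (k : ℤ) b * bk + TjZ ((k : ℤ) + 1) b * TiInv bk)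

/-- The function `b_k`. -/
def bj (a b c : QG) (k : ℕ) : QG := (bH a b c k).1

/-- The Laplace j-invariant `H_k`. -/
def Hj (a b c : QG) (k : ℕ) : QG := (bH a b c k).2

/-- The operator `L_k`: `L_0 = L` and
`L_k = (T_i − T_j^k(b)·)∘(T_j − T_i⁻¹(b_k)·) − H_k·` for `k ≥ 1`. -/
def Lk (a b c : QG) : ℕ → QG → QG
  | 0, φ => L a b c φ
  | k + 1, φ =>
      Ti (Tj φ - TiInv (bj a b c (k + 1)) * φ)
        - TjZ ((k : ℤ) + 1) b * (Tj φ - TiInv (bj a b c (k + 1)) * φ)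
        - Hj a b c (k + 1) * φ

/-- `Bo (k+1)` is the operator `B_k = (T_j − T_i⁻¹(b_k)·)∘B_{k-1}`; `Bo 0 = id` is `B_{-1}`. -/
def Bo (a b c : QG) : ℕ → QG → QG
  | 0, φ => φ
  | k + 1, φ => Tj (Bo a b c k φ) - TiInv (bj a b c k) * Bo a b c k φ

/-- `Bbar k` is the operator `B̄_k`: `B̄_0 = id`, `B̄_k = (T_j − b_k·)∘B̄_{k-1}`. -/
def Bbar (a b c : QG) : ℕ → QG → QG
  | 0, φ => φ
  | k + 1, φ => Tj (Bbar a b c k φ) - bj a b c (k + 1) * Bbar a b c k φ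

/-- `Rchain p` is the composition
`((1/H_0)·)∘(T_i − b·)∘((1/H_1)·)∘(T_i − T_j(b)·)∘···∘((1/H_{p-1})·)∘(T_i − T_j^{p-1}(b)·)`
(the identity for `p = 0`). -/
def Rchain (a b c : QG) : ℕ → QG → QG
  | 0, φ => φ
  | k + 1, φ => Rchain a b c k ((1 / Hj a b c k) * (Ti φ - TjZ (k : ℤ) b * φ))

end

namespace Statement19Aux

noncomputable section

lemma L_apply (a b c φ : QG) (i j : ℤ) :
    L a b c φ i j = φ (i+1) (j+1) - a i j * φ (i+1) j - b i j * φ i (j+1) - c i j * φ i j := rfl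

lemma sum_delta_hit (lam : ℕ → QG) (x y : ℤ) (n m : ℕ) (i t : ℤ)
    (ht : ∀ k, k < n → ((i + (k:ℤ) = t) ↔ k = m)) (hm : m < n) :
    ∑ k ∈ Finset.range n, lam k x y * (if i + (k:ℤ) = t then (1:ℝ) else 0) = lam m x y := by
  rw [Finset.sum_congr rfl (fun k hk =>
    by rw [if_congr (ht k (Finset.mem_range.mp hk)) rfl rfl])]
  simp only [mul_ite, mul_one, mul_zero]
  rw [Finset.sum_ite_eq' (Finset.range n) m (fun k => lam k x y)]
  simp [hm]

lemma sum_delta_miss (lam : ℕ → QG) (x y : ℤ) (n : ℕ) (i t : ℤ)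
    (ht : ∀ k, k < n → i + (k:ℤ) ≠ t) :
    ∑ k ∈ Finset.range n, lam k x y * (if i + (k:ℤ) = t then (1:ℝ) else 0) = 0 :=
  Finset.sum_eq_zero fun k hk => by
    rw [if_neg (ht k (Finset.mem_range.mp hk)), mul_zero]

lemma Etop (s : ℕ) (a b c : QG) (lam : ℕ → QG)
    (hR : ∀ f : ℤ → ℝ,
      L a b c (fun i j => ∑ k ∈ Finset.range (s + 1), lam k i j * f (i + k)) = 0)
    (i j : ℤ) : lam s (i+1) (j+1) - a i j * lam s (i+1) j = 0 := by
  have h := congrFun (congrFun (hR fun x => if x = i + 1 + (s:ℤ) then 1 else 0) i) j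
  rw [L_apply] at h
  simp only [Pi.zero_apply] at h
  rw [sum_delta_hit lam (i+1) (j+1) (s+1) s (i+1) (i + 1 + (s:ℤ)) (by omega) (by omega),
      sum_delta_hit lam (i+1) j (s+1) s (i+1) (i + 1 + (s:ℤ)) (by omega) (by omega),
      sum_delta_miss lam i (j+1) (s+1) i (i + 1 + (s:ℤ)) (by omega),
      sum_delta_miss lam i j (s+1) i (i + 1 + (s:ℤ)) (by omega)] at h
  linarith

lemma Esec (s : ℕ) (a b c : QG) (lam : ℕ → QG)
    (hR : ∀ f : ℤ → ℝ,
      L a b c (fun i j => ∑ k ∈ Finset.range (s + 1 + 1), lam k i j * f (i + k)) = 0)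
    (i j : ℤ) :
    lam s (i+1) (j+1) - a i j * lam s (i+1) j
      - b i j * lam (s+1) i (j+1) - c i j * lam (s+1) i j = 0 := by
  have h := congrFun (congrFun (hR fun x => if x = i + 1 + (s:ℤ) then 1 else 0) i) j
  rw [L_apply] at h
  simp only [Pi.zero_apply] at h
  rw [sum_delta_hit lam (i+1) (j+1) (s+1+1) s (i+1) (i + 1 + (s:ℤ)) (by omega) (by omega),
      sum_delta_hit lam (i+1) j (s+1+1) s (i+1) (i + 1 + (s:ℤ)) (by omega) (by omega),
      sum_delta_hit lam i (j+1) (s+1+1) (s+1) i (i + 1 + (s:ℤ)) (by omega) (by omega),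
      sum_delta_hit lam i j (s+1+1) (s+1) i (i + 1 + (s:ℤ)) (by omega) (by omega)] at h
  linarith

lemma Efirst (s : ℕ) (a b c : QG) (lam : ℕ → QG)
    (hR : ∀ f : ℤ → ℝ,
      L a b c (fun i j => ∑ k ∈ Finset.range (s + 1), lam k i j * f (i + k)) = 0)
    (i j : ℤ) : b i j * lam 0 i (j+1) + c i j * lam 0 i j = 0 := by
  have h := congrFun (congrFun (hR fun x => if x = i then 1 else 0) i) j
  rw [L_apply] at h
  simp only [Pi.zero_apply] at h
  rw [sum_delta_miss lam (i+1) (j+1) (s+1) (i+1) i (by omega),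
      sum_delta_miss lam (i+1) j (s+1) (i+1) i (by omega),
      sum_delta_hit lam i (j+1) (s+1) 0 i i (by omega) (by omega),
      sum_delta_hit lam i j (s+1) 0 i i (by omega) (by omega)] at h
  linarith

lemma Hj_zero_apply (a b c : QG) (i j : ℤ) :
    Hj a b c 0 i j = c i j + b i j * a (i-1) j := rfl

lemma finish (a b c : QG) (lr : QG) (hH0 : NowhereZero (Hj a b c 0))
    (htop : ∀ i j, lr (i+1) (j+1) - a i j * lr (i+1) j = 0)
    (hsec : ∀ i j, b i j * lr i (j+1) + c i j * lr i j = 0) : lr = 0 := by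
  funext i j
  have h1 := htop (i-1) j
  rw [show i - 1 + 1 = i by ring] at h1
  have h2 := hsec i j
  have h0 : c i j + b i j * a (i-1) j ≠ 0 := by
    have := hH0 i j; rwa [Hj_zero_apply] at this
  have h3 : (c i j + b i j * a (i-1) j) * lr i j = 0 := by
    linear_combination h2 - b i j * h1
  show lr i j = 0
  rcases mul_eq_zero.mp h3 with h | h
  · exact absurd h h0
  · exact h

lemma bH_succ (a b c : QG) (k : ℕ) :
    bH a b c (k+1) =
      (TiInv (bH a b c k).1 * Tj (bH a b c k).2 / (bH a b c k).2,
       Tj (bH a b c k).2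
         - TjZ (k : ℤ) b * (TiInv (bH a b c k).1 * Tj (bH a b c k).2 / (bH a b c k).2)
         + TjZ ((k : ℤ) + 1) b
             * TiInv (TiInv (bH a b c k).1 * Tj (bH a b c k).2 / (bH a b c k).2)) := rfl

lemma TjZ_Tj (b : QG) (k : ℤ) : TjZ k (Tj b) = TjZ (k+1) b := by
  funext i j; simp [TjZ, Tj, add_assoc]

lemma TjZ_zero' (b : QG) : TjZ ((0:ℕ):ℤ) b = b := by
  funext i j; simp [TjZ]

lemma TjZ_one' (b : QG) : TjZ (((0:ℕ):ℤ)+1) b = Tj b := by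
  funext i j; norm_num [TjZ, Tj]

lemma bH_shift (a b c : QG) (k : ℕ) :
    bH (bj a b c 1) (Tj b) (Tj (Hj a b c 0) - b * bj a b c 1) k = bH a b c (k+1) := by
  induction k with
  | zero =>
    rw [bH_succ a b c 0, TjZ_zero', TjZ_one']
    rfl
  | succ k ih =>
    rw [bH_succ (bj a b c 1) (Tj b) (Tj (Hj a b c 0) - b * bj a b c 1) k, ih,
        bH_succ a b c (k+1), TjZ_Tj, TjZ_Tj]
    push_cast
    ring_nf

lemma Hj_shift (a b c : QG) (m : ℕ) :
    Hj (bj a b c 1) (Tj b) (Tj (Hj a b c 0) - b * bj a b c 1) m = Hj a b c (m+1) := by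
  rw [Hj, bH_shift]; rfl


lemma bj_one_apply (a b c : QG) (i j : ℤ) :
    bj a b c 1 i j
      = a (i-1) j * (c i (j+1) + b i (j+1) * a (i-1) (j+1)) / (c i j + b i j * a (i-1) j) := rfl

def lamp (a : QG) (lam : ℕ → QG) (k : ℕ) : QG :=
  fun x y => lam k x (y+1) - a (x-1) y * lam k x y

theorem key : ∀ (r : ℕ) (a b c : QG) (lam : ℕ → QG),
    (∀ f : ℤ → ℝ,
      L a b c (fun i j => ∑ k ∈ Finset.range (r + 1), lam k i j * f (i + k)) = 0) →
    (∀ m, m ≤ r → NowhereZero (Hj a b c m)) → lam r = 0 := by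
  intro r
  induction r with
  | zero =>
    intro a b c lam hR hH
    exact finish a b c (lam 0) (hH 0 le_rfl) (Etop 0 a b c lam hR) (Efirst 0 a b c lam hR)
  | succ r ih =>
    intro a b c lam hR hH
    have hD : ∀ x y : ℤ, c x y + b x y * a (x-1) y ≠ 0 := by
      intro x y
      have h := hH 0 (Nat.zero_le _) x y
      rwa [Hj_zero_apply] at h
    have htop : ∀ x y : ℤ, lam (r+1) x (y+1) - a (x-1) y * lam (r+1) x y = 0 := by
      intro x y
      have h := Etop (r+1) a b c lam hR (x-1) y
      rwa [show x - 1 + 1 = x by ring] at h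
    have hR' : ∀ f : ℤ → ℝ,
        L (bj a b c 1) (Tj b) (Tj (Hj a b c 0) - b * bj a b c 1)
          (fun i j => ∑ k ∈ Finset.range (r + 1), lamp a lam k i j * f (i + (k:ℤ))) = 0 := by
      intro f
      have hsum : (fun i j => ∑ k ∈ Finset.range (r + 1), lamp a lam k i j * f (i + (k:ℤ))) =
          (fun x y => (∑ k ∈ Finset.range (r + 1 + 1), lam k x (y+1) * f (x + (k:ℤ)))
            - a (x-1) y * ∑ k ∈ Finset.range (r + 1 + 1), lam k x y * f (x + (k:ℤ))) := by
        funext x y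
        rw [Finset.mul_sum, ← Finset.sum_sub_distrib]
        conv_rhs => rw [Finset.sum_range_succ]
        have hz : lam (r+1) x (y+1) * f (x + ((r+1:ℕ):ℤ))
            - a (x-1) y * (lam (r+1) x y * f (x + ((r+1:ℕ):ℤ))) = 0 := by
          linear_combination f (x + ((r+1:ℕ):ℤ)) * htop x y
        rw [hz, add_zero]
        apply Finset.sum_congr rfl
        intro k _
        simp only [lamp]
        ring
      rw [hsum]
      funext i j
      have h1 := congrFun (congrFun (hR f) i) j
      have h2 := congrFun (congrFun (hR f) i) (j+1)
      rw [L_apply] at h1 h2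
      simp only [Pi.zero_apply] at h1 h2
      rw [L_apply]
      simp only [Pi.sub_apply, Pi.mul_apply, Tj, bj_one_apply, Hj_zero_apply, Pi.zero_apply,
        add_sub_cancel_right]
      have hinv := mul_inv_cancel₀ (hD i j)
      linear_combination h2
        - a (i-1) j * (c i (j+1) + b i (j+1) * a (i-1) (j+1)) * (c i j + b i j * a (i-1) j)⁻¹ * h1
        - a (i-1) j * (c i (j+1) + b i (j+1) * a (i-1) (j+1))
          * (∑ k ∈ Finset.range (r + 1 + 1), lam k i j * f (i + (k:ℤ))) * hinv
    have hz : lamp a lam r = 0 :=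
      ih (bj a b c 1) (Tj b) (Tj (Hj a b c 0) - b * bj a b c 1) (lamp a lam) hR'
        (fun m hm => by rw [Hj_shift]; exact hH (m+1) (by omega))
    apply finish a b c (lam (r+1)) (hH 0 (Nat.zero_le _)) (Etop (r+1) a b c lam hR)
    intro i j
    have h := Esec r a b c lam hR i j
    have hm := congrFun (congrFun hz (i+1)) j
    simp only [lamp, Pi.zero_apply, add_sub_cancel_right] at hm
    linarith

end
end Statement19Aux

/-- Let `r ≥ 0` and `λ_0, …, λ_r ∈ 𝔊` be such that
`R(f)(i,j) = Σ_{k=0}^r λ_k(i,j)·f(i+k)` satisfies `L(R(f)) = 0` for every `f : ℤ → ℝ`.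
If the Laplace j-invariants `H_0, …, H_r` are all nowhere zero, then `λ_r` vanishes
identically. -/
theorem statement19 (a b c : QG) (r : ℕ) (lam : ℕ → QG)
    (hR : ∀ f : ℤ → ℝ,
      L a b c (fun i j => ∑ k ∈ Finset.range (r + 1), lam k i j * f (i + k)) = 0)
    (hH : ∀ m, m ≤ r → NowhereZero (Hj a b c m)) :
    lam r = 0 := Statement19Aux.key r a b c lam hR hH

end QG
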